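/- Let A, K, S, z be as follows: K ⊆ A ⊆ M(K) with K a closed essential ideal, S a closed semiregular operator on A whose restriction to K is regular with z-transform z. Then z·A ⊆ closure((1 - zz*)^{1/2}·A). -/

import Mathlib

/-- A densely defined operator on a C*-subalgebra `A` of an ambient unital C*-algebra `M`
(playing the role of `M(K)`).  It is presented by a total function `toFun` whose
meaningful values are those on its domain `dom ⊆ A`, which is a dense right ideal of `A`
on which the operator is `ℂ`-linear and right `A`-linear. -/
structure AmbientOp (M : Type*) [CStarAlgebra M] (A : Set M) where
  dom : Set M
  toFun : M → M
  dom_sub : dom ⊆ A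
  maps_to : ∀ a ∈ dom, toFun a ∈ A
  dense_dom : ∀ a ∈ A, a ∈ closure dom
  zero_mem : (0 : M) ∈ dom
  add_mem : ∀ a ∈ dom, ∀ b ∈ dom, a + b ∈ dom
  smul_mem : ∀ (c : ℂ), ∀ a ∈ dom, c • a ∈ dom
  mul_mem : ∀ a ∈ dom, ∀ x ∈ A, a * x ∈ dom
  map_add' : ∀ a ∈ dom, ∀ b ∈ dom, toFun (a + b) = toFun a + toFun b
  map_smul' : ∀ (c : ℂ), ∀ a ∈ dom, toFun (c • a) = c • toFun a
  map_mul' : ∀ a ∈ dom, ∀ x ∈ A, toFun (a * x) = toFun a * x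

namespace AmbientOp

variable {M : Type*} [CStarAlgebra M] {A : Set M}

/-- The domain of the adjoint `S*`, relative to the algebra `A`. -/
def adjDom (S : AmbientOp M A) : Set M :=
  {a : M | a ∈ A ∧ ∃ c ∈ A, ∀ b ∈ S.dom, star a * S.toFun b = star c * b}

/-- `S` is semiregular if its adjoint is densely defined in `A`. -/
def Semiregular (S : AmbientOp M A) : Prop := ∀ a ∈ A, a ∈ closure S.adjDom

/-- `S` is a closed operator if its graph is closed. -/
def IsClosedOp (S : AmbientOp M A) : Prop :=
  IsClosed {p : M × M | p.1 ∈ S.dom ∧ p.2 = S.toFun p.1}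

open Classical in
/-- The value of the adjoint `S*` at `a` (junk value `0` off the adjoint domain). -/
noncomputable def adjFun (S : AmbientOp M A) (a : M) : M :=
  if h : ∃ c ∈ A, ∀ b ∈ S.dom, star a * S.toFun b = star c * b then h.choose else 0

/-- The domain of the double adjoint `S**`, relative to `A`. -/
def adjDom2 (S : AmbientOp M A) : Set M :=
  {a : M | a ∈ A ∧ ∃ c ∈ A, ∀ b ∈ S.adjDom, star a * S.adjFun b = star c * b}

open Classical in
/-- The value of the double adjoint `S**` at `a`. -/
noncomputable def adjFun2 (S : AmbientOp M A) (a : M) : M :=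
  if h : ∃ c ∈ A, ∀ b ∈ S.adjDom, star a * S.adjFun b = star c * b then h.choose else 0

end AmbientOp

open Polynomial in
lemma aux_aeval_comm {M : Type*} [CStarAlgebra M] (z a a' : M)
    (hc : z * a = a' * z) (q : ℝ[X]) :
    z * (aeval a q) = (aeval a' q) * z := by
  induction q using Polynomial.induction_on' with
  | add p q hp hq => simp [map_add, mul_add, add_mul, hp, hq]
  | monomial n r =>
    have hpow : ∀ n : ℕ, z * a ^ n = a' ^ n * z := by
      intro n
      induction n with
      | zero => simp
      | succ n ih =>
        rw [pow_succ, pow_succ, ← mul_assoc, ih, mul_assoc, mul_assoc, hc, ← mul_assoc]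
    simp only [aeval_monomial]
    calc z * (algebraMap ℝ M r * a ^ n) = algebraMap ℝ M r * (z * a ^ n) := by
          rw [← mul_assoc, ← Algebra.commutes r z, mul_assoc]
      _ = algebraMap ℝ M r * a' ^ n * z := by rw [hpow, mul_assoc]

lemma aux_cfc_comm {M : Type*} [CStarAlgebra M] (z a a' : M)
    (ha : IsSelfAdjoint a) (ha' : IsSelfAdjoint a')
    (hc : z * a = a' * z) {f : ℝ → ℝ} (hf : Continuous f) :
    z * cfc f a = cfc f a' * z := by
  nontriviality M
  set R := max ‖a‖ ‖a'‖ with hR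
  have hmem : ∀ (b : M), ‖b‖ ≤ R → ∀ x ∈ spectrum ℝ b, x ∈ Set.Icc (-R) R := by
    intro b hb x hx
    have h1 : |x| ≤ R := le_trans (spectrum.norm_le_norm_of_mem hx) hb
    exact Set.mem_Icc.mpr (abs_le.mp h1)
  have key : ∀ ε : ℝ, 0 < ε → ‖z * cfc f a - cfc f a' * z‖ ≤ ε := by
    intro ε hε
    set δ := ε / (2 * (‖z‖ + 1)) with hδdef
    have hδ : 0 < δ := by positivity
    obtain ⟨q, hq⟩ := exists_polynomial_near_of_continuousOn (-R) R f hf.continuousOn δ hδ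
    have hqa : z * cfc q.eval a = cfc q.eval a' * z := by
      rw [cfc_polynomial q a ha, cfc_polynomial q a' ha']
      exact aux_aeval_comm z a a' hc q
    have h1 : ∀ (b : M), IsSelfAdjoint b → ‖b‖ ≤ R → ‖cfc f b - cfc q.eval b‖ ≤ δ := by
      intro b hb hbR
      rw [← cfc_sub f q.eval b hf.continuousOn (q.continuous.continuousOn)]
      apply norm_cfc_le hδ.le
      intro x hx
      have h2 := hq x (hmem b hbR x hx)
      rw [Real.norm_eq_abs, abs_sub_comm]
      exact h2.le
    have hsplit : z * cfc f a - cfc f a' * z =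
        z * (cfc f a - cfc q.eval a) + (cfc q.eval a' - cfc f a') * z
          + (z * cfc q.eval a - cfc q.eval a' * z) := by noncomm_ring
    rw [hsplit, hqa, sub_self, add_zero]
    calc ‖z * (cfc f a - cfc q.eval a) + (cfc q.eval a' - cfc f a') * z‖
        ≤ ‖z * (cfc f a - cfc q.eval a)‖ + ‖(cfc q.eval a' - cfc f a') * z‖ := norm_add_le _ _
      _ ≤ ‖z‖ * δ + δ * ‖z‖ := by
          gcongr
          · exact le_trans (norm_mul_le _ _) (by
              have := h1 a ha (le_max_left _ _)
              exact mul_le_mul_of_nonneg_left this (norm_nonneg z))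
          · exact le_trans (norm_mul_le _ _) (by
              have := h1 a' ha' (le_max_right _ _)
              rw [norm_sub_rev] at this
              exact mul_le_mul_of_nonneg_right this (norm_nonneg z))
      _ = 2 * ‖z‖ * δ := by ring
      _ ≤ 2 * (‖z‖ + 1) * δ := by
          have : ‖z‖ ≤ ‖z‖ + 1 := by linarith
          gcongr
      _ = ε := by rw [hδdef]; field_simp
  have h0 : ‖z * cfc f a - cfc f a' * z‖ ≤ 0 := by
    by_contra hlt
    push_neg at hlt
    have := key (‖z * cfc f a - cfc f a' * z‖ / 2) (by linarith)
    linarith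
  have := norm_le_zero_iff.mp h0
  exact sub_eq_zero.mp this

lemma aux_one_sub_nonneg {M : Type*} [CStarAlgebra M] [PartialOrder M] [StarOrderedRing M]
    (w : M) (hw : 0 ≤ w) (hn : ‖w‖ ≤ 1) : 0 ≤ 1 - w := by
  have key : ∀ s : ℝ, 0 ≤ s → 0 ≤ algebraMap ℝ M s := by
    intro s hs
    have hsa : star (algebraMap ℝ M (Real.sqrt s)) = algebraMap ℝ M (Real.sqrt s) := by
      simp [Algebra.algebraMap_eq_smul_one, star_smul]
    have h1 : algebraMap ℝ M s
        = star (algebraMap ℝ M (Real.sqrt s)) * algebraMap ℝ M (Real.sqrt s) := by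
      rw [hsa, ← map_mul, Real.mul_self_sqrt hs]
    rw [h1]
    exact star_mul_self_nonneg _
  have h1 : w ≤ algebraMap ℝ M ‖w‖ :=
    IsSelfAdjoint.le_algebraMap_norm_self (IsSelfAdjoint.of_nonneg hw)
  have h2 : algebraMap ℝ M ‖w‖ ≤ 1 := by
    have h3 := key (1 - ‖w‖) (by linarith)
    rw [map_sub, map_one] at h3
    exact sub_nonneg.mp h3
  exact sub_nonneg.mpr (h1.trans h2)

lemma aux_g_cont : Continuous (fun x : ℝ => (NNReal.sqrt x.toNNReal : ℝ)) :=
  NNReal.continuous_coe.comp (NNReal.continuous_sqrt.comp continuous_real_toNNReal)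

lemma aux_sqrt_eq_cfc {M : Type*} [CStarAlgebra M] [PartialOrder M] [StarOrderedRing M]
    (b : M) (hb : 0 ≤ b) :
    CFC.sqrt b = cfc (fun x : ℝ => (NNReal.sqrt x.toNNReal : ℝ)) b := by
  rw [CFC.sqrt, cfcₙ_nnreal_eq_real NNReal.sqrt b hb,
    cfcₙ_eq_cfc (aux_g_cont.continuousOn) (by simp)]

/-- In the standing setup (`S` closed semiregular on `A`, `S|_K` regular with z-transform
`z`), one has `z·A ⊆ closure((1 - zz*)^{1/2}·A)`. -/
theorem stmt_13
    {M : Type*} [CStarAlgebra M] [PartialOrder M] [StarOrderedRing M]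
    (A : NonUnitalStarSubalgebra ℂ M) (hAc : IsClosed (A : Set M))
    (K : TwoSidedIdeal M) (hKc : IsClosed (K : Set M))
    (hKstar : ∀ k ∈ K, star k ∈ K)
    (hKA : (K : Set M) ⊆ (A : Set M))
    (hKess : ∀ m : M, (∀ k ∈ K, m * k = 0) → m = 0)
    (S : AmbientOp M (A : Set M)) (hS : S.Semiregular) (hSc : S.IsClosedOp)
    (z : M) (hz : ‖z‖ ≤ 1)
    (hzdense : ∀ k ∈ K, k ∈ closure ((fun x => CFC.sqrt (1 - star z * z) * x) '' K))
    (hzdom : S.dom ∩ (K : Set M) = (fun x => CFC.sqrt (1 - star z * z) * x) '' K)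
    (hzact : ∀ k ∈ K, S.toFun (CFC.sqrt (1 - star z * z) * k) = z * k) :
    ∀ a ∈ A, z * a ∈ closure ((fun x => CFC.sqrt (1 - z * star z) * x) '' A) := by
  intro a ha
  have hb : 0 ≤ 1 - star z * z := by
    apply aux_one_sub_nonneg _ (star_mul_self_nonneg z)
    rw [CStarRing.norm_star_mul_self]
    nlinarith [norm_nonneg z]
  have hb' : 0 ≤ 1 - z * star z := by
    apply aux_one_sub_nonneg _ (mul_star_self_nonneg z)
    rw [CStarRing.norm_self_mul_star]
    nlinarith [norm_nonneg z]
  have hgc := aux_g_cont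
  have hcomm : z * CFC.sqrt (1 - star z * z) = CFC.sqrt (1 - z * star z) * z := by
    rw [aux_sqrt_eq_cfc _ hb, aux_sqrt_eq_cfc _ hb']
    exact aux_cfc_comm z _ _ (IsSelfAdjoint.of_nonneg hb) (IsSelfAdjoint.of_nonneg hb')
      (by noncomm_ring) hgc
  have hdom : ∀ d ∈ S.dom, z * d ∈ (fun x => CFC.sqrt (1 - z * star z) * x) '' A := by
    intro d hd
    refine ⟨S.toFun d, S.maps_to d hd, ?_⟩
    have h0 : z * d - CFC.sqrt (1 - z * star z) * S.toFun d = 0 := by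
      apply hKess
      intro k hk
      have hmem : d * k ∈ S.dom ∩ (K : Set M) :=
        ⟨S.mul_mem d hd k (hKA hk), K.mul_mem_left d k hk⟩
      rw [hzdom] at hmem
      obtain ⟨k', hk', hdk⟩ := hmem
      have hact := hzact k' hk'
      have hmul := S.map_mul' d hd k (hKA hk)
      have h5 : S.toFun d * k = z * k' := by rw [← hmul, ← hdk]; exact hact
      have h6 : z * d * k = CFC.sqrt (1 - z * star z) * S.toFun d * k := by
        rw [mul_assoc, ← hdk]
        dsimp only
        rw [← mul_assoc, hcomm, mul_assoc, mul_assoc, ← h5, ← mul_assoc]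
      rw [sub_mul, h6, sub_self]
    exact (sub_eq_zero.mp h0).symm
  have h7 : z * a ∈ closure ((fun x => z * x) '' S.dom) := by
    have hda := S.dense_dom a ha
    exact image_closure_subset_closure_image (continuous_const.mul continuous_id)
      (Set.mem_image_of_mem _ hda)
  refine closure_mono ?_ h7
  rintro _ ⟨d, hd, rfl⟩
  exact hdom d hd
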